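/- Let f = h + conj(g) be a sense-preserving harmonic mapping on the unit disk D with β(f) < ∞ (so f ∈ B_H), with g(0) = 0, and let c₀ = g'(0)/h'(0) be the value of the dilatation at 0. Then for all z ∈ D with |z| = r: max{ |h(z) − h(0)|, |g(z)| } ≤ β(f)·√((1+|c₀|)/(1−|c₀|))·r/√(1−r²). -/

import Mathlib

open Metric Set Filter

/-- Jacobian of the harmonic mapping `f = h + conj g`. -/
noncomputable def jacobian (h g : ℂ → ℂ) (z : ℂ) : ℝ :=
  ‖deriv h z‖ ^ 2 - ‖deriv g z‖ ^ 2

/-- The Bloch-type seminorm `β(f) = sup_{z ∈ 𝔻} (1 - |z|²) √|J_f(z)|`. -/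
noncomputable def betaH (h g : ℂ → ℂ) : ℝ :=
  sSup ((fun z => (1 - ‖z‖ ^ 2) * Real.sqrt |jacobian h g z|) '' Metric.ball 0 1)

/-- Membership in the Bloch-type class `B_H`, i.e. `β(f) < ∞`. -/
def InBH (h g : ℂ → ℂ) : Prop :=
  BddAbove ((fun z => (1 - ‖z‖ ^ 2) * Real.sqrt |jacobian h g z|) '' Metric.ball 0 1)

private lemma sq_abs_sub (a v : ℂ) :
    ‖1 - (starRingEnd ℂ) a * v‖ ^ 2 - ‖a - v‖ ^ 2
      = (1 - ‖a‖ ^ 2) * (1 - ‖v‖ ^ 2) := by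
  rw [Complex.sq_norm, Complex.sq_norm, Complex.sq_norm, Complex.sq_norm]
  simp only [Complex.normSq_apply, Complex.sub_re, Complex.sub_im, Complex.mul_re,
    Complex.mul_im, Complex.one_re, Complex.one_im, Complex.conj_re, Complex.conj_im]
  ring

private lemma deriv_bound_aux (h g : ℂ → ℂ) (c₀ : ℂ)
    (hh : DifferentiableOn ℂ h (Metric.ball 0 1))
    (hg : DifferentiableOn ℂ g (Metric.ball 0 1))
    (hsp : ∀ z ∈ Metric.ball (0 : ℂ) 1, ‖deriv g z‖ < ‖deriv h z‖)
    (hβ : InBH h g)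
    (hc₀ : c₀ = deriv g 0 / deriv h 0) :
    ∀ w ∈ Metric.ball (0:ℂ) 1,
      ‖deriv h w‖
        ≤ betaH h g * Real.sqrt ((1 + ‖c₀‖) / (1 - ‖c₀‖))
          / ((1 - ‖w‖ ^ 2) * Real.sqrt (1 - ‖w‖ ^ 2)) := by
  set c : ℝ := ‖c₀‖ with hc
  have h0mem : (0:ℂ) ∈ ball (0:ℂ) 1 := mem_ball_self one_pos
  have hne : ∀ z ∈ ball (0:ℂ) 1, deriv h z ≠ 0 := by
    intro z hz
    have h1 := (norm_nonneg (deriv g z)).trans_lt (hsp z hz)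
    exact norm_ne_zero_iff.mp h1.ne'
  have hc1 : c < 1 := by
    rw [hc, hc₀, norm_div]
    exact div_lt_one ((norm_nonneg _).trans_lt (hsp 0 h0mem)) |>.mpr (hsp 0 h0mem)
  have hc0 : 0 ≤ c := norm_nonneg _
  set ω : ℂ → ℂ := fun z => deriv g z / deriv h z with hωdef
  have hdh : DifferentiableOn ℂ (deriv h) (ball 0 1) :=
    ((hh.analyticOnNhd isOpen_ball).deriv).differentiableOn
  have hdg : DifferentiableOn ℂ (deriv g) (ball 0 1) :=
    ((hg.analyticOnNhd isOpen_ball).deriv).differentiableOn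
  have hω : DifferentiableOn ℂ ω (ball 0 1) := hdg.div hdh hne
  have hωlt : ∀ z ∈ ball (0:ℂ) 1, ‖ω z‖ < 1 := by
    intro z hz
    rw [hωdef]
    simp only [norm_div]
    exact div_lt_one ((norm_nonneg _).trans_lt (hsp z hz)) |>.mpr (hsp z hz)
  set ψ : ℂ → ℂ := fun z => (c₀ - ω z) / (1 - (starRingEnd ℂ) c₀ * ω z) with hψdef
  have hden : ∀ z ∈ ball (0:ℂ) 1, (1 : ℂ) - (starRingEnd ℂ) c₀ * ω z ≠ 0 := by
    intro z hz heq
    rw [sub_eq_zero] at heq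
    have h1 : ‖(starRingEnd ℂ) c₀ * ω z‖ = 1 := by rw [← heq]; simp
    rw [norm_mul, Complex.norm_conj] at h1
    nlinarith [hωlt z hz, hc0, norm_nonneg (ω z)]
  have hdenlb : ∀ z ∈ ball (0:ℂ) 1,
      1 - c ≤ ‖1 - (starRingEnd ℂ) c₀ * ω z‖ := by
    intro z hz
    have h1 : ‖(1:ℂ)‖ - ‖(starRingEnd ℂ) c₀ * ω z‖ ≤ ‖(1:ℂ) - (starRingEnd ℂ) c₀ * ω z‖ :=
      norm_sub_norm_le _ _
    simp only [norm_one, norm_mul, Complex.norm_conj] at h1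
    have h2 : c * ‖ω z‖ ≤ c * 1 :=
      mul_le_mul_of_nonneg_left (hωlt z hz).le hc0
    rw [← hc] at h1
    linarith
  have hψdiff : DifferentiableOn ℂ ψ (ball 0 1) :=
    ((differentiableOn_const _).sub hω).div
      ((differentiableOn_const _).sub ((differentiableOn_const _).mul hω)) hden
  have hψ0 : ψ 0 = 0 := by
    simp only [hψdef, hωdef, ← hc₀, sub_self, zero_div]
  have hψmaps : MapsTo ψ (ball (0:ℂ) 1) (ball (0:ℂ) 1) := by
    intro z hz
    rw [mem_ball_zero_iff, hψdef]
    simp only [norm_div]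
    have hid := sq_abs_sub c₀ (ω z)
    rw [← hc] at hid
    have e1 : (0:ℝ) < 1 - c ^ 2 := by nlinarith
    have e2 : (0:ℝ) < 1 - ‖ω z‖ ^ 2 := by
      have := hωlt z hz
      have := norm_nonneg (ω z)
      nlinarith
    have h1 : (0:ℝ) < (1 - c ^ 2) * (1 - ‖ω z‖ ^ 2) := mul_pos e1 e2
    have hd := hdenlb z hz
    have hn := norm_nonneg (c₀ - ω z)
    rw [div_lt_one (by linarith)]
    nlinarith
  intro w hw
  have hs1 : ‖w‖ < 1 := mem_ball_zero_iff.mp hw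
  set s : ℝ := ‖w‖ with hs
  set a : ℝ := ‖deriv h w‖ with ha
  set b : ℝ := ‖deriv g w‖ with hb
  have hba : b < a := hsp w hw
  have hb0 : 0 ≤ b := norm_nonneg _
  have ha0 : 0 < a := hb0.trans_lt hba
  have hs0 : 0 ≤ s := norm_nonneg _
  have h1s : (0:ℝ) < 1 - s ^ 2 := by nlinarith
  have h1c : (0:ℝ) < 1 - c := by linarith
  have h1c' : (0:ℝ) < 1 + c := by linarith
  have hsch : ‖ψ w‖ ≤ s :=
    Complex.norm_le_norm_of_mapsTo_ball hψdiff (hψmaps.mono_right ball_subset_closedBall) hψ0 hs1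
  set t : ℝ := ‖ω w‖ with htdef
  have ht : t = b / a := by rw [htdef, hωdef]; simp [norm_div, ← ha, ← hb]
  have key : (1 - c) * (1 - s ^ 2) ≤ (1 + c) * (1 - t ^ 2) := by
    have hid := sq_abs_sub c₀ (ω w)
    rw [← hc, ← htdef] at hid
    set den : ℝ := ‖1 - (starRingEnd ℂ) c₀ * ω w‖ with hdend
    set num : ℝ := ‖c₀ - ω w‖ with hnumd
    have hd : 1 - c ≤ den := hdenlb w hw
    have hn0 : 0 ≤ num := norm_nonneg _
    have hd0 : 0 < den := lt_of_lt_of_le h1c hd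
    have hψw : ‖ψ w‖ = num / den := by
      rw [hψdef]; simp only [norm_div, ← hnumd, ← hdend]
    rw [hψw, div_le_iff₀ hd0] at hsch
    have hn2 : num ^ 2 ≤ (s * den) ^ 2 :=
      pow_le_pow_left₀ hn0 hsch 2
    have h3 : den ^ 2 * (1 - s ^ 2) ≤ den ^ 2 - num ^ 2 := by linarith [hn2]
    have hd2 : (1 - c) ^ 2 ≤ den ^ 2 := pow_le_pow_left₀ h1c.le hd 2
    have h4 : (1 - c) ^ 2 * (1 - s ^ 2) ≤ den ^ 2 * (1 - s ^ 2) :=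
      mul_le_mul_of_nonneg_right hd2 h1s.le
    have h6 : (1 - c) * ((1 - c) * (1 - s ^ 2)) ≤ (1 - c) * ((1 + c) * (1 - t ^ 2)) := by
      linarith [h4, h3, hid]
    exact le_of_mul_le_mul_left h6 h1c
  have hbeta : (1 - s ^ 2) * Real.sqrt (a ^ 2 - b ^ 2) ≤ betaH h g := by
    have hmem : (1 - ‖w‖ ^ 2) * Real.sqrt |jacobian h g w|
        ∈ ((fun z => (1 - ‖z‖ ^ 2) * Real.sqrt |jacobian h g z|) '' Metric.ball 0 1) :=
      ⟨w, hw, rfl⟩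
    have hle := le_csSup hβ hmem
    have hj : |jacobian h g w| = a ^ 2 - b ^ 2 := by
      unfold jacobian
      rw [← ha, ← hb, abs_of_nonneg (by nlinarith)]
    rwa [hj, ← hs] at hle
  have hdivnn : (0:ℝ) ≤ (1 - c) / (1 + c) := div_nonneg h1c.le h1c'.le
  have hab : a ^ 2 * ((1 - c) / (1 + c)) * (1 - s ^ 2) ≤ a ^ 2 - b ^ 2 := by
    have h5 : b ^ 2 = a ^ 2 * t ^ 2 := by rw [ht]; field_simp
    have key' : (1 - c) / (1 + c) * (1 - s ^ 2) ≤ 1 - t ^ 2 := by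
      rw [div_mul_eq_mul_div, div_le_iff₀ h1c']
      linarith [key]
    have h7 := mul_le_mul_of_nonneg_left key' (sq_nonneg a)
    nlinarith [h7]
  have e : Real.sqrt (a ^ 2 * ((1 - c) / (1 + c)) * (1 - s ^ 2))
      = a * Real.sqrt ((1 - c) / (1 + c)) * Real.sqrt (1 - s ^ 2) := by
    rw [Real.sqrt_mul (mul_nonneg (sq_nonneg a) hdivnn), Real.sqrt_mul (sq_nonneg a),
      Real.sqrt_sq ha0.le]
  have hsq : a * Real.sqrt ((1 - c) / (1 + c)) * Real.sqrt (1 - s ^ 2)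
      ≤ Real.sqrt (a ^ 2 - b ^ 2) := e ▸ Real.sqrt_le_sqrt hab
  have hq : Real.sqrt ((1 - c) / (1 + c)) * Real.sqrt ((1 + c) / (1 - c)) = 1 := by
    rw [← Real.sqrt_mul hdivnn]
    rw [show (1 - c) / (1 + c) * ((1 + c) / (1 - c)) = 1 by field_simp]
    exact Real.sqrt_one
  have hpos : 0 < (1 - s ^ 2) * Real.sqrt (1 - s ^ 2) :=
    mul_pos h1s (Real.sqrt_pos.2 h1s)
  rw [le_div_iff₀ hpos]
  have hfin : a * ((1 - s ^ 2) * Real.sqrt (1 - s ^ 2)) * Real.sqrt ((1 - c) / (1 + c))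
      ≤ betaH h g := by
    calc a * ((1 - s ^ 2) * Real.sqrt (1 - s ^ 2)) * Real.sqrt ((1 - c) / (1 + c))
        = (1 - s ^ 2) * (a * Real.sqrt ((1 - c) / (1 + c)) * Real.sqrt (1 - s ^ 2)) := by ring
      _ ≤ (1 - s ^ 2) * Real.sqrt (a ^ 2 - b ^ 2) :=
          mul_le_mul_of_nonneg_left hsq h1s.le
      _ ≤ betaH h g := hbeta
  calc a * ((1 - s ^ 2) * Real.sqrt (1 - s ^ 2))
      = a * ((1 - s ^ 2) * Real.sqrt (1 - s ^ 2)) * Real.sqrt ((1 - c) / (1 + c))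
          * Real.sqrt ((1 + c) / (1 - c)) := by rw [mul_assoc, hq, mul_one]
    _ ≤ betaH h g * Real.sqrt ((1 + c) / (1 - c)) :=
        mul_le_mul_of_nonneg_right hfin (Real.sqrt_nonneg _)


private lemma B_deriv (K r t : ℝ) (hu : 0 < 1 - r ^ 2 * t ^ 2) :
    HasDerivAt (fun τ : ℝ => K * r * τ / Real.sqrt (1 - r ^ 2 * τ ^ 2))
      (K * r / ((1 - r ^ 2 * t ^ 2) * Real.sqrt (1 - r ^ 2 * t ^ 2))) t := by
  have hqpos : 0 < Real.sqrt (1 - r ^ 2 * t ^ 2) := Real.sqrt_pos.2 hu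
  have hq2 : Real.sqrt (1 - r ^ 2 * t ^ 2) ^ 2 = 1 - r ^ 2 * t ^ 2 := Real.sq_sqrt hu.le
  have hsqin : HasDerivAt (fun τ : ℝ => 1 - r ^ 2 * τ ^ 2) (-(r ^ 2 * (2 * t))) t := by
    simpa using ((hasDerivAt_pow 2 t).const_mul (r ^ 2)).const_sub 1
  have hroot : HasDerivAt (fun τ : ℝ => Real.sqrt (1 - r ^ 2 * τ ^ 2))
      (1 / (2 * Real.sqrt (1 - r ^ 2 * t ^ 2)) * -(r ^ 2 * (2 * t))) t :=
    (Real.hasDerivAt_sqrt hu.ne').comp t hsqin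
  have hnum : HasDerivAt (fun τ : ℝ => K * r * τ) (K * r) t := by
    simpa using (hasDerivAt_id t).const_mul (K * r)
  have hdiv := hnum.div hroot hqpos.ne'
  refine hdiv.congr_deriv ?_
  set q := Real.sqrt (1 - r ^ 2 * t ^ 2) with hqdef
  field_simp
  linear_combination (-K * r ^ 3 * t ^ 2) * hq2

set_option maxHeartbeats 1000000 in
private lemma seg_bound (F : ℂ → ℂ) (K : ℝ)
    (hF : DifferentiableOn ℂ F (Metric.ball 0 1))
    (hbound : ∀ w ∈ Metric.ball (0:ℂ) 1, ‖deriv F w‖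
      ≤ K / ((1 - ‖w‖ ^ 2) * Real.sqrt (1 - ‖w‖ ^ 2)))
    (z : ℂ) (hz : z ∈ Metric.ball (0:ℂ) 1) :
    ‖F z - F 0‖ ≤ K * ‖z‖ / Real.sqrt (1 - ‖z‖ ^ 2) := by
  set r : ℝ := ‖z‖ with hrdef
  have hr1 : r < 1 := mem_ball_zero_iff.mp hz
  have hr0 : 0 ≤ r := norm_nonneg _
  have hmem : ∀ t ∈ Icc (0:ℝ) 1, (↑t * z) ∈ Metric.ball (0:ℂ) 1 := by
    intro t ht
    rw [mem_ball_zero_iff, norm_mul, Complex.norm_real,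
      Real.norm_of_nonneg ht.1, ← hrdef]
    calc t * r ≤ 1 * r := mul_le_mul_of_nonneg_right ht.2 hr0
      _ < 1 := by rwa [one_mul]
  have habs : ∀ t ∈ Icc (0:ℝ) 1, ‖↑t * z‖ = t * r := by
    intro t ht
    rw [norm_mul, Complex.norm_real, Real.norm_of_nonneg ht.1, ← hrdef]
  have hu : ∀ t ∈ Icc (0:ℝ) 1, (0:ℝ) < 1 - r ^ 2 * t ^ 2 := by
    intro t ht
    have h1 : t * r < 1 := by
      calc t * r ≤ 1 * r := mul_le_mul_of_nonneg_right ht.2 hr0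
        _ < 1 := by rwa [one_mul]
    nlinarith [mul_nonneg ht.1 hr0]
  set f : ℝ → ℂ := fun t => F (↑t * z) - F 0 with hfdef
  set B : ℝ → ℝ := fun τ => K * r * τ / Real.sqrt (1 - r ^ 2 * τ ^ 2) with hBdef
  have hf' : ∀ t ∈ Ico (0:ℝ) 1,
      HasDerivWithinAt f (deriv F (↑t * z) * z) (Ici t) t := by
    intro t ht
    have htIcc : t ∈ Icc (0:ℝ) 1 := ⟨ht.1, ht.2.le⟩
    have hFd : HasDerivAt F (deriv F (↑t * z)) (↑t * z) :=
      (hF.differentiableAt (isOpen_ball.mem_nhds (hmem t htIcc))).hasDerivAt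
    have hin : HasDerivAt (fun w : ℂ => w * z) z (↑t : ℂ) := by
      simpa using (hasDerivAt_id (↑t : ℂ)).mul_const z
    have hcomp : HasDerivAt (fun w : ℂ => F (w * z)) (deriv F (↑t * z) * z) (↑t : ℂ) :=
      hFd.comp (↑t : ℂ) hin
    exact ((hcomp.comp_ofReal).sub_const (F 0)).hasDerivWithinAt
  have hB' : ∀ t ∈ Ico (0:ℝ) 1,
      HasDerivWithinAt B (K * r / ((1 - r ^ 2 * t ^ 2) * Real.sqrt (1 - r ^ 2 * t ^ 2)))
        (Ici t) t := fun t ht =>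
    (B_deriv K r t (hu t ⟨ht.1, ht.2.le⟩)).hasDerivWithinAt
  have hbnd : ∀ t ∈ Ico (0:ℝ) 1,
      ‖deriv F (↑t * z) * z‖ ≤ K * r / ((1 - r ^ 2 * t ^ 2) * Real.sqrt (1 - r ^ 2 * t ^ 2)) := by
    intro t ht
    have htIcc : t ∈ Icc (0:ℝ) 1 := ⟨ht.1, ht.2.le⟩
    have hb := hbound _ (hmem t htIcc)
    rw [habs t htIcc, show ((t * r) ^ 2 : ℝ) = r ^ 2 * t ^ 2 by ring] at hb
    have hupos := hu t htIcc
    have hD : (0:ℝ) < (1 - r ^ 2 * t ^ 2) * Real.sqrt (1 - r ^ 2 * t ^ 2) :=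
      mul_pos hupos (Real.sqrt_pos.2 hupos)
    rw [norm_mul, ← hrdef]
    calc ‖deriv F (↑t * z)‖ * r
        ≤ K / ((1 - r ^ 2 * t ^ 2) * Real.sqrt (1 - r ^ 2 * t ^ 2)) * r :=
          mul_le_mul_of_nonneg_right hb hr0
      _ = K * r / ((1 - r ^ 2 * t ^ 2) * Real.sqrt (1 - r ^ 2 * t ^ 2)) := by ring
  have hfc : ContinuousOn f (Icc 0 1) := by
    apply ContinuousOn.sub _ continuousOn_const
    exact hF.continuousOn.comp
      ((Complex.continuous_ofReal.mul continuous_const).continuousOn) hmem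
  have hBc : ContinuousOn B (Icc 0 1) := by
    apply ContinuousOn.div
    · fun_prop
    · fun_prop
    · intro t ht
      exact (Real.sqrt_pos.2 (hu t ht)).ne'
  have hfa : ‖f 0‖ ≤ B 0 := by
    simp [hfdef, hBdef]
  have := image_norm_le_of_norm_deriv_right_le_deriv_boundary' hfc hf' hfa hBc hB' hbnd
    (right_mem_Icc.2 zero_le_one)
  have hf1 : f 1 = F z - F 0 := by simp [hfdef]
  have hB1 : B 1 = K * r / Real.sqrt (1 - r ^ 2) := by
    simp [hBdef]
  rw [hf1, hB1] at this
  exact this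

/-- **Growth estimate in `B_H`.**  If `f = h + conj g` is sense-preserving with `β(f) < ∞`,
`g(0) = 0` and `c₀ = g'(0)/h'(0)`, then for `|z| = r < 1` we get
`max{|h(z)-h(0)|, |g(z)|} ≤ β(f)·√((1+|c₀|)/(1-|c₀|))·r/√(1-r²)`. -/
theorem growth_estimate_BH (h g : ℂ → ℂ) (c₀ : ℂ)
    (hh : DifferentiableOn ℂ h (Metric.ball 0 1))
    (hg : DifferentiableOn ℂ g (Metric.ball 0 1))
    (hsp : ∀ z ∈ Metric.ball (0 : ℂ) 1, ‖deriv g z‖ < ‖deriv h z‖)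
    (hβ : InBH h g) (g0 : g 0 = 0)
    (hc₀ : c₀ = deriv g 0 / deriv h 0) :
    ∀ z ∈ Metric.ball (0 : ℂ) 1,
      max (‖h z - h 0‖) (‖g z‖)
        ≤ betaH h g * Real.sqrt ((1 + ‖c₀‖) / (1 - ‖c₀‖))
            * ‖z‖ / Real.sqrt (1 - ‖z‖ ^ 2) := by
  intro z hz
  have hdb := deriv_bound_aux h g c₀ hh hg hsp hβ hc₀
  have hdbg : ∀ w ∈ Metric.ball (0:ℂ) 1, ‖deriv g w‖
      ≤ betaH h g * Real.sqrt ((1 + ‖c₀‖) / (1 - ‖c₀‖))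
        / ((1 - ‖w‖ ^ 2) * Real.sqrt (1 - ‖w‖ ^ 2)) :=
    fun w hw => le_trans (hsp w hw).le (hdb w hw)
  have h1 := seg_bound h (betaH h g * Real.sqrt ((1 + ‖c₀‖) / (1 - ‖c₀‖)))
    hh hdb z hz
  have h2 := seg_bound g (betaH h g * Real.sqrt ((1 + ‖c₀‖) / (1 - ‖c₀‖)))
    hg hdbg z hz
  rw [g0, sub_zero] at h2
  exact max_le h1 h2
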